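/- Let m ≥ 1 and let λ_1,...,λ_m be positive reals, not necessarily distinct, with λ_1 ≤ ... ≤ λ_m. Then the (m+1)×(m+1) determinant D = 1 + ∑_{k=1}^m (λ_{m-k+1}⋯λ_m) E_k satisfies D ≥ ∑_{k=0}^m E_k^{(2)} = ∏_{i=1}^m (1+λ_i²), and in particular D ≥ 1. -/

import Mathlib

open Finset

/-- The `k`-th elementary symmetric function of `l 0, ..., l (m-1)`. -/
def esymmVal (m : ℕ) (l : Fin m → ℝ) (k : ℕ) : ℝ :=
  ∑ s ∈ Finset.powersetCard k (Finset.univ : Finset (Fin m)), ∏ i ∈ s, l i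

/-- The product of the top `k` values `l (m-k) ⋯ l (m-1)`. -/
def topProd (m : ℕ) (l : Fin m → ℝ) (k : ℕ) : ℝ :=
  ∏ i ∈ Finset.univ.filter (fun i : Fin m => m - k ≤ (i : ℕ)), l i

lemma card_topSet (m k : ℕ) (hk : k ≤ m) :
    (Finset.univ.filter (fun i : Fin m => m - k ≤ (i : ℕ))).card = k := by
  rcases Nat.eq_zero_or_pos k with rfl | hk0
  · simp [Finset.filter_eq_empty_iff, Nat.not_le, Fin.is_lt]
  · have hmk : m - k < m := by omega
    have : (Finset.univ.filter (fun i : Fin m => m - k ≤ (i : ℕ))) = Finset.Ici (⟨m - k, hmk⟩ : Fin m) := by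
      ext i; simp [Fin.le_def]
    rw [this, Fin.card_Ici]; simp; omega

lemma prod_le_topSet (m k : ℕ) (l : Fin m → ℝ) (hl : ∀ i, 0 < l i) (hmono : Monotone l) :
    ∀ n (s : Finset (Fin m)), s.card = k →
      (s \ (univ.filter fun i : Fin m => m - k ≤ (i : ℕ))).card = n →
      ∏ i ∈ s, l i ≤ ∏ i ∈ (univ.filter fun i : Fin m => m - k ≤ (i : ℕ)), l i := by
  intro n
  induction n using Nat.strong_induction_on with
  | _ n ih =>
    intro s hs hn
    set T := (univ.filter fun i : Fin m => m - k ≤ (i : ℕ)) with hTdef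
    have hk : k ≤ m := by
      have := Finset.card_le_card (Finset.subset_univ s)
      simpa [hs] using this
    have hTcard : T.card = k := card_topSet m k hk
    rcases Nat.eq_zero_or_pos n with rfl | hn0
    · have hsub : s ⊆ T := by
        rw [← Finset.sdiff_eq_empty_iff_subset]
        exact Finset.card_eq_zero.mp hn
      have : s = T := Finset.eq_of_subset_of_card_le hsub (by rw [hs, hTcard])
      rw [this]
    · have hne : (s \ T).Nonempty := by
        rw [← Finset.card_pos, hn]; exact hn0
      obtain ⟨i, hi⟩ := hne
      have hne2 : (T \ s).Nonempty := by
        rw [← Finset.card_pos, Finset.card_sdiff_comm (by rw [hs, hTcard])]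
        rw [hn]; exact hn0
      obtain ⟨j, hj⟩ := hne2
      have his : i ∈ s := (Finset.mem_sdiff.mp hi).1
      have hiT : i ∉ T := (Finset.mem_sdiff.mp hi).2
      have hjT : j ∈ T := (Finset.mem_sdiff.mp hj).1
      have hjs : j ∉ s := (Finset.mem_sdiff.mp hj).2
      have hij : l i ≤ l j := by
        apply hmono
        have h1 : (i : ℕ) < m - k := by
          have := hiT
          simp only [hTdef, Finset.mem_filter, Finset.mem_univ, true_and, Nat.not_le] at this
          exact this
        have h2 : m - k ≤ (j : ℕ) := by
          simpa [hTdef] using hjT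
        exact Fin.le_def.mpr (le_of_lt (lt_of_lt_of_le h1 h2))
      set s' := insert j (s.erase i) with hs'def
      have hjnotmem : j ∉ s.erase i := fun h => hjs (Finset.mem_of_mem_erase h)
      have hs'card : s'.card = k := by
        rw [hs'def, Finset.card_insert_of_notMem hjnotmem, Finset.card_erase_of_mem his, hs]
        have : 1 ≤ k := by rw [← hs]; exact Finset.card_pos.mpr ⟨i, his⟩
        omega
      have hsdiff : s' \ T = (s \ T).erase i := by
        ext x
        simp only [hs'def, Finset.mem_sdiff, Finset.mem_insert, Finset.mem_erase]
        constructor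
        · rintro ⟨hx1 | ⟨hx1, hx2⟩, hx3⟩
          · exact absurd (hx1 ▸ hjT) hx3
          · exact ⟨hx1, hx2, hx3⟩
        · rintro ⟨hx1, hx2, hx3⟩
          exact ⟨Or.inr ⟨hx1, hx2⟩, hx3⟩
      have hcard' : (s' \ T).card = n - 1 := by
        rw [hsdiff, Finset.card_erase_of_mem (Finset.mem_sdiff.mpr ⟨his, hiT⟩), hn]
      have hlt : ∏ x ∈ s, l x ≤ ∏ x ∈ s', l x := by
        rw [← Finset.prod_erase_mul s l his, hs'def,
          Finset.prod_insert hjnotmem, mul_comm (l j)]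
        apply mul_le_mul_of_nonneg_left hij
        exact le_of_lt (Finset.prod_pos fun x _ => hl x)
      exact hlt.trans (ih (n - 1) (by omega) s' hs'card hcard')

lemma prod_le_topProd' (m k : ℕ) (l : Fin m → ℝ) (hl : ∀ i, 0 < l i) (hmono : Monotone l)
    (s : Finset (Fin m)) (hs : s.card = k) :
    ∏ i ∈ s, l i ≤ topProd m l k :=
  prod_le_topSet m k l hl hmono _ s hs rfl

theorem stmt16 (m : ℕ) (hm : 1 ≤ m) (l : Fin m → ℝ) (hl : ∀ i, 0 < l i)
    (hmono : Monotone l) :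
    (∑ k ∈ Finset.range (m + 1), esymmVal m (fun i => (l i) ^ 2) k
        ≤ 1 + ∑ k ∈ Finset.Icc 1 m, topProd m l k * esymmVal m l k) ∧
    (∑ k ∈ Finset.range (m + 1), esymmVal m (fun i => (l i) ^ 2) k
        = ∏ i : Fin m, (1 + (l i) ^ 2)) ∧
    (1 ≤ 1 + ∑ k ∈ Finset.Icc 1 m, topProd m l k * esymmVal m l k) := by
  have hsplit : Finset.range (m + 1) = insert 0 (Finset.Icc 1 m) := by
    ext x; simp; omega
  have h0 : esymmVal m (fun i => (l i) ^ 2) 0 = 1 := by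
    simp [esymmVal]
  refine ⟨?_, ?_, ?_⟩
  · rw [hsplit, Finset.sum_insert (by simp), h0]
    apply add_le_add_right
    apply Finset.sum_le_sum
    intro k hk
    rw [esymmVal, esymmVal, Finset.mul_sum]
    apply Finset.sum_le_sum
    intro s hs
    have hcard : s.card = k := (Finset.mem_powersetCard_univ.mp hs)
    have hpos : (0 : ℝ) ≤ ∏ i ∈ s, l i :=
      le_of_lt (Finset.prod_pos fun x _ => hl x)
    calc ∏ i ∈ s, (l i) ^ 2 = (∏ i ∈ s, l i) * ∏ i ∈ s, l i := by
          rw [← Finset.prod_mul_distrib]; congr 1; ext i; ring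
      _ ≤ topProd m l k * ∏ i ∈ s, l i :=
          mul_le_mul_of_nonneg_right (prod_le_topProd' m k l hl hmono s hcard) hpos
  · rw [show (∏ i : Fin m, (1 + (l i) ^ 2)) = ∏ i : Fin m, ((l i) ^ 2 + 1) by
        congr 1; ext i; ring]
    rw [Finset.prod_add]
    simp only [Finset.prod_const_one, mul_one]
    rw [Finset.sum_powerset]
    simp [esymmVal]
  · apply le_add_of_nonneg_right
    apply Finset.sum_nonneg
    intro k hk
    apply mul_nonneg
    · exact le_of_lt (Finset.prod_pos fun x _ => hl x)
    · exact Finset.sum_nonneg fun s _ => le_of_lt (Finset.prod_pos fun x _ => hl x)
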